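/- Let α be a limit ordinal with uncountable cofinality, and suppose X_α is a topological space on underlying set α that is left-separated in the natural ordering and contains a dense subset of cardinality cf(α) (for instance, any cofinal subset S ⊆ α that is dense in X_α). Then the set of uncountable regular calibers of X_α is exactly the class of all uncountable regular cardinals other than cf(α), provided every uncountable regular ρ < cf(α) is a caliber of X_α. -/

import Mathlib

universe u v

open Cardinal

/-- `ρ` is a caliber of the space `X`. -/
def IsCaliber (X : Type u) [TopologicalSpace X] (ρ : Cardinal.{v}) : Prop :=
  ∀ {ι : Type v} (U : ι → Set X), #ι = ρ → (∀ i, IsOpen (U i) ∧ (U i).Nonempty) →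
    ∃ s : Set ι, #s = ρ ∧ (⋂ i ∈ s, U i).Nonempty

/-- If `ρ` is regular, `#ι = ρ` and `#β < ρ`, then some fiber of `f : ι → β` has size `ρ`. -/
theorem exists_big_fiber {ι β : Type u} {ρ : Cardinal.{u}} (hρ : ρ.IsRegular)
    (hι : #ι = ρ) (hβ : #β < ρ) (f : ι → β) : ∃ b : β, ρ ≤ #(f ⁻¹' {b}) := by
  by_contra h
  push_neg at h
  have huniv : (⋃ b : β, f ⁻¹' {b}) = Set.univ := by
    ext i; simp
  have : #(⋃ b : β, f ⁻¹' {b}) < ρ :=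
    (Cardinal.card_iUnion_lt_iff_forall_of_isRegular hρ hβ).2 h
  rw [huniv, Cardinal.mk_univ, hι] at this
  exact lt_irrefl _ this

/-- Packaging of Lemma 2.3: if `X` is a space on underlying set `α` (a limit ordinal of
uncountable cofinality), left-separated in the natural ordering, with a dense subset of
cardinality `cf(α)`, and every uncountable regular `ρ < cf(α)` is a caliber of `X`, then
the uncountable regular calibers of `X` are exactly the uncountable regular cardinals
other than `cf(α)`. -/
theorem calibers_of_left_separated_space (X : Type u) [TopologicalSpace X]
    (α : Ordinal.{u}) (hα : Order.IsSuccLimit α) (hcof : ℵ₀ < α.cof)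
    (x : {ξ : Ordinal // ξ < α} → X) (hbij : Function.Bijective x)
    (hclosed : ∀ β : Ordinal, IsClosed (x '' {ξ | ξ.1 < β}))
    (hdense : ∃ D : Set X, Dense D ∧ #D = α.cof)
    (hsmall : ∀ ρ : Cardinal.{u}, ℵ₀ < ρ → ρ.IsRegular → ρ < α.cof → IsCaliber X ρ) :
    ∀ ρ : Cardinal.{u}, ℵ₀ < ρ → ρ.IsRegular → (IsCaliber X ρ ↔ ρ ≠ α.cof) := by
  intro ρ hρ0 hρreg
  constructor
  · -- caliber → ρ ≠ cf α
    intro hcal hEq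
    subst hEq
    -- construct a family witnessing failure of caliber cf α
    obtain ⟨f, hf⟩ := Ordinal.exists_fundamental_sequence α
    let e : α.cof.ord.ToType ≃o Set.Iio α.cof.ord := (Ordinal.ToType.mk (o := _)).symm
    let g : α.cof.ord.ToType → Ordinal := fun i => (e i).1
    have hg_lt : ∀ i, g i < α.cof.ord := fun i => (e i).2
    let U : α.cof.ord.ToType → Set X := fun i => (x '' {ξ | ξ.1 < f (g i) (hg_lt i)})ᶜ
    have hcard : #α.cof.ord.ToType = α.cof := by
      rw [Cardinal.mk_toType, Cardinal.card_ord]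
    have hUprop : ∀ i, IsOpen (U i) ∧ (U i).Nonempty := by
      intro i
      refine ⟨(hclosed _).isOpen_compl, ?_⟩
      have hlt : f (g i) (hg_lt i) < α := hf.lt (hg_lt i)
      refine ⟨x ⟨f (g i) (hg_lt i), hlt⟩, ?_⟩
      rintro ⟨ζ, hζ, hxz⟩
      have := hbij.injective hxz
      rw [this, Set.mem_setOf_eq] at hζ
      exact lt_irrefl _ hζ
    obtain ⟨s, hs, ⟨y, hy⟩⟩ := hcal U hcard hUprop
    -- y = x ξ for some ξ < α
    obtain ⟨ξ, rfl⟩ := hbij.surjective y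
    -- find j < cf(α).ord with ξ < f j
    have hsucc : ξ.1 + 1 < α := by
      rw [Ordinal.add_one_eq_succ]; exact hα.succ_lt ξ.2
    have hblsub : ξ.1 + 1 < Ordinal.blsub α.cof.ord f := by rw [hf.blsub_eq]; exact hsucc
    rw [Ordinal.lt_blsub_iff] at hblsub
    obtain ⟨j, hj, hξj⟩ := hblsub
    have hξj' : ξ.1 < f j hj := by
      have h1 : ξ.1 < ξ.1 + 1 := by
        rw [Ordinal.add_one_eq_succ]; exact Order.lt_succ _
      exact h1.trans_le hξj
    -- s must contain some i with j ≤ g i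
    have hbig : ∃ i ∈ s, j ≤ g i := by
      by_contra hno
      push_neg at hno
      -- then s injects into j.ToType, so #s ≤ j.card < cf α
      let e' : Set.Iio j ≃o j.ToType := Ordinal.ToType.mk (o := j)
      have hinj : Function.Injective (fun i : s => e' ⟨g i.1, hno i.1 i.2⟩) := by
        intro a b hab
        have h1 : (⟨g a.1, hno a.1 a.2⟩ : Set.Iio j) = ⟨g b.1, hno b.1 b.2⟩ :=
          e'.injective hab
        have h2 := congrArg (Subtype.val : Set.Iio j → Ordinal) h1
        have h3 : (e a.1 : Set.Iio α.cof.ord) = e b.1 := Subtype.ext h2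
        exact Subtype.ext (e.injective h3)
      have h1 : #s ≤ #j.ToType := Cardinal.mk_le_of_injective hinj
      rw [Cardinal.mk_toType] at h1
      have h2 : j.card < α.cof := by
        rw [← Cardinal.lt_ord]; exact hj
      rw [hs] at h1
      exact absurd (lt_of_le_of_lt h1 h2) (lt_irrefl _)
    obtain ⟨i, hi, hji⟩ := hbig
    have hyUi : x ξ ∈ U i := by
      have := hy
      simp only [Set.mem_iInter] at this
      exact this i hi
    apply hyUi
    refine ⟨ξ, ?_, rfl⟩
    exact lt_of_lt_of_le hξj' (hf.monotone hj (hg_lt i) hji)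
  · -- ρ ≠ cf α → caliber
    intro hne
    rcases lt_or_gt_of_ne hne with hlt | hgt
    · exact hsmall ρ hρ0 hρreg hlt
    · -- ρ > cf α : use the dense set
      obtain ⟨D, hD, hDcard⟩ := hdense
      intro ι U hι hU
      have hpick : ∀ i, ∃ d : D, (d : X) ∈ U i := by
        intro i
        obtain ⟨z, hzD, hzU⟩ := hD.exists_mem_open (hU i).1 (hU i).2
        exact ⟨⟨z, hzD⟩, hzU⟩
      choose d hd using hpick
      have hDlt : #D < ρ := by rw [hDcard]; exact hgt
      obtain ⟨b, hb⟩ := exists_big_fiber hρreg hι hDlt d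
      refine ⟨d ⁻¹' {b}, le_antisymm (hι ▸ Cardinal.mk_set_le _) hb, ⟨(b : X), ?_⟩⟩
      simp only [Set.mem_iInter]
      intro i hi
      have : d i = b := hi
      rw [← this]
      exact hd i
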